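/- arXiv:1809.09524 — 2 statements merged into one kernel-verified Lean document; each statement's English description precedes it below -/
import Mathlib

section
/- Let S, I_1, ..., I_k, and Z be independent nonnegative random variables, where S is exponentially distributed with rate λ_S > 0, each I_j is exponentially distributed with rate λ_j > 0, and Z is an arbitrary nonnegative random variable. Then for all x ≥ 0, the CDF of the ratio γ = S/(Z + Σ_{j=1}^k I_j) satisfies P(γ ≤ x) = 1 − E[exp(−λ_S x Z)] · ∏_{j=1}^k λ_j/(λ_j + λ_S x). -/
open MeasureTheory ProbabilityTheory

open Real Set Filter Topology in

lemma sinr_exp_laplace {r c : ℝ} (hr : 0 < r) (hc : 0 ≤ c) :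
    ∫ y, Real.exp (-(c * y)) ∂(expMeasure r) = r / (r + c) := by
  have hb : 0 < r + c := by linarith
  have hmeas : Measurable fun y : ℝ => Real.exp (-(c * y)) := by fun_prop
  set g : ℝ → ℝ := fun y => (if 0 ≤ y then r * Real.exp (-(r * y)) else 0) * Real.exp (-(c * y))
    with hg
  have hgmeas : Measurable g := by
    apply Measurable.mul _ (by fun_prop)
    exact Measurable.ite measurableSet_Ici (by fun_prop) measurable_const
  have hgnonneg : ∀ y, 0 ≤ g y := by
    intro y
    apply mul_nonneg _ (Real.exp_pos _).le
    split_ifs with h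
    · positivity
    · exact le_refl 0
  have h1 : ∫ y, Real.exp (-(c * y)) ∂(expMeasure r)
      = (∫⁻ y, ENNReal.ofReal (Real.exp (-(c * y))) ∂(expMeasure r)).toReal := by
    rw [integral_eq_lintegral_of_nonneg_ae (ae_of_all _ fun y => (Real.exp_pos _).le)
      hmeas.aestronglyMeasurable]
  have hpdfm : Measurable (gammaPDF 1 r) := (measurable_gammaPDFReal 1 r).ennreal_ofReal
  have h2 : ∫⁻ y, ENNReal.ofReal (Real.exp (-(c * y))) ∂(expMeasure r)
      = ∫⁻ y, ENNReal.ofReal (g y) := by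
    rw [expMeasure, gammaMeasure,
      lintegral_withDensity_eq_lintegral_mul _ hpdfm hmeas.ennreal_ofReal]
    refine lintegral_congr fun y => ?_
    have h5 : gammaPDF 1 r y = exponentialPDF r y := rfl
    simp only [Pi.mul_apply]
    rw [h5, exponentialPDF_eq, hg, ← ENNReal.ofReal_mul (by positivity)]
  have h3 : (∫⁻ y, ENNReal.ofReal (g y)).toReal = ∫ y, g y := by
    rw [integral_eq_lintegral_of_nonneg_ae (ae_of_all _ hgnonneg) hgmeas.aestronglyMeasurable]
  have h4 : ∫ y, g y = ∫ y in Ioi (0:ℝ), r * Real.exp (-((r + c) * y)) := by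
    have hind : g = Set.indicator (Ici (0:ℝ)) (fun y => r * Real.exp (-((r + c) * y))) := by
      funext y
      by_cases h : 0 ≤ y
      · simp only [hg, if_pos h, Set.indicator_of_mem (mem_Ici.mpr h), mul_assoc,
          ← Real.exp_add]
        ring_nf
      · simp only [hg, if_neg h, Set.indicator_of_notMem (fun hy => h (mem_Ici.mp hy)),
          zero_mul]
    rw [hind, integral_indicator measurableSet_Ici, integral_Ici_eq_integral_Ioi]
  have h5 : ∫ y in Ioi (0:ℝ), r * Real.exp (-((r + c) * y)) = r / (r + c) := by
    have hderiv : ∀ y ∈ Ici (0:ℝ),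
        HasDerivAt (fun a => (r / (r + c)) * (-Real.exp (-((r + c) * a))))
          (r * Real.exp (-((r + c) * y))) y := by
      intro y _
      have hd := (hasDerivAt_neg_exp_mul_exp (r := r + c) (x := y)).const_mul (r / (r + c))
      rw [show r * Real.exp (-((r + c) * y)) = r / (r + c) * ((r + c) * Real.exp (-((r + c) * y))) by
        rw [← mul_assoc, div_mul_cancel₀ r hb.ne']]
      exact hd
    have hint : IntegrableOn (fun y => r * Real.exp (-((r + c) * y))) (Ioi (0:ℝ)) := by
      have := (exp_neg_integrableOn_Ioi 0 hb).const_mul r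
      simp only [neg_mul] at this ⊢
      exact this
    have h0 : Tendsto (fun a : ℝ => Real.exp (-((r + c) * a))) atTop (𝓝 0) :=
      Real.tendsto_exp_neg_atTop_nhds_zero.comp (Tendsto.const_mul_atTop hb tendsto_id)
    have htend : Tendsto (fun a : ℝ => (r / (r + c)) * (-Real.exp (-((r + c) * a))))
        atTop (𝓝 0) := by
      have := h0.neg.const_mul (r / (r + c))
      simpa using this
    rw [integral_Ioi_of_hasDerivAt_of_tendsto' hderiv hint htend]
    simp [Real.exp_zero]
  rw [h1, h2, h3, h4, h5]

set_option maxHeartbeats 1000000 in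
/-- CDF of the SINR `γ = S / (Z + Σ_j I_j)` with `S` exponential of rate `lS`,
`I_j` exponential of rates `lam j`, `Z` nonnegative, all mutually independent. -/
theorem sinr_cdf_general
    {Ω : Type*} [MeasurableSpace Ω] (μ : Measure Ω) [IsProbabilityMeasure μ]
    (k : ℕ) (S Z : Ω → ℝ) (I : Fin k → Ω → ℝ)
    (lS : ℝ) (hlS : 0 < lS) (lam : Fin k → ℝ) (hlam : ∀ j, 0 < lam j)
    (hSm : Measurable S) (hZm : Measurable Z) (hIm : ∀ j, Measurable (I j))
    (f : Fin k ⊕ Bool → Ω → ℝ)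
    (hf : f = Sum.elim I (fun b => if b then S else Z))
    (hindep : iIndepFun f μ)
    (hSdist : μ.map S = expMeasure lS)
    (hIdist : ∀ j, μ.map (I j) = expMeasure (lam j))
    (hZnonneg : ∀ᵐ ω ∂μ, 0 ≤ Z ω)
    (hden : ∀ᵐ ω ∂μ, 0 < Z ω + ∑ j, I j ω)
    (x : ℝ) (hx : 0 ≤ x) :
    (μ {ω | S ω / (Z ω + ∑ j, I j ω) ≤ x}).toReal
      = 1 - (∫ ω, Real.exp (-(lS * x * Z ω)) ∂μ) * ∏ j, lam j / (lam j + lS * x) := by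
  classical
  set D : Ω → ℝ := fun ω => Z ω + ∑ j, I j ω with hD
  have hfm : ∀ i, Measurable (f i) := by
    intro i
    subst hf
    rcases i with j | b
    · exact hIm j
    · cases b
      · exact hZm
      · exact hSm
  have hfS : f (Sum.inr true) = S := by rw [hf]; rfl
  have hfZ : f (Sum.inr false) = Z := by rw [hf]; rfl
  have hfI : ∀ j, f (Sum.inl j) = I j := fun j => by rw [hf]; rfl
  have hDm : Measurable D := hZm.add (Finset.measurable_sum _ fun j _ => hIm j)
  -- the index set of the denominator
  have hT : (Finset.univ.erase (Sum.inr true) : Finset (Fin k ⊕ Bool))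
      = insert (Sum.inr false) (Finset.univ.image (Sum.inl : Fin k → Fin k ⊕ Bool)) := by
    ext i
    rcases i with j | b
    · simp
    · cases b <;> simp
  have hnotmem : (Sum.inr false : Fin k ⊕ Bool)
      ∉ Finset.univ.image (Sum.inl : Fin k → Fin k ⊕ Bool) := by simp
  have hDsum : D = ∑ i ∈ Finset.univ.erase (Sum.inr true), f i := by
    funext ω
    rw [Finset.sum_apply, hT, Finset.sum_insert hnotmem,
      Finset.sum_image (fun a _ b _ h => Sum.inl_injective h), hfZ]
    simp only [hfI]
    rfl
  -- Step 1: rewrite the event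
  have hstep1 : μ {ω | S ω / D ω ≤ x} = μ {ω | S ω ≤ x * D ω} := by
    apply measure_congr
    rw [Filter.eventuallyEq_set]
    filter_upwards [hden] with ω hω
    show S ω / D ω ≤ x ↔ S ω ≤ x * D ω
    rw [div_le_iff₀ hω]
  -- Step 2: independence of S and D
  have hSD : IndepFun S D μ := by
    have h2 := hindep.indepFun_finset {Sum.inr true} (Finset.univ.erase (Sum.inr true))
      (by simp) hfm
    have hφ : Measurable fun v : ({Sum.inr true} : Finset (Fin k ⊕ Bool)) → ℝ =>
        v ⟨Sum.inr true, by simp⟩ := measurable_pi_apply _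
    have hψ : Measurable fun v : (Finset.univ.erase (Sum.inr true) : Finset (Fin k ⊕ Bool)) → ℝ =>
        ∑ i, v i := Finset.measurable_sum _ fun i _ => measurable_pi_apply i
    have h3 := h2.comp hφ hψ
    have e1 : (fun v : ({Sum.inr true} : Finset (Fin k ⊕ Bool)) → ℝ =>
        v ⟨Sum.inr true, by simp⟩) ∘ (fun a (i : ({Sum.inr true} : Finset (Fin k ⊕ Bool))) => f i a)
        = S := by funext a; simp [hfS]
    have e2 : (fun v : (Finset.univ.erase (Sum.inr true) : Finset (Fin k ⊕ Bool)) → ℝ =>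
        ∑ i, v i) ∘ (fun a (i : (Finset.univ.erase (Sum.inr true) : Finset (Fin k ⊕ Bool))) => f i a)
        = D := by
      funext a
      simp only [Function.comp_apply, hDsum, Finset.sum_apply]
      exact Finset.sum_coe_sort _ (fun i => f i a)
    rwa [e1, e2] at h3
  haveI : IsProbabilityMeasure (μ.map D) := Measure.isProbabilityMeasure_map hDm.aemeasurable
  haveI : IsProbabilityMeasure (expMeasure lS) := isProbabilityMeasure_expMeasure hlS
  have hpos : ∀ᵐ y ∂(μ.map D), 0 < y := by
    rw [ae_map_iff hDm.aemeasurable measurableSet_Ioi]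
    exact hden
  -- Step 4: slice the product measure
  set A : Set (ℝ × ℝ) := {p | p.1 ≤ x * p.2} with hA
  have hAm : MeasurableSet A := measurableSet_le measurable_fst (measurable_snd.const_mul x)
  have hstep4 : μ {ω | S ω ≤ x * D ω}
      = ∫⁻ y, expMeasure lS (Set.Iic (x * y)) ∂(μ.map D) := by
    have h1 : μ {ω | S ω ≤ x * D ω} = μ.map (fun ω => (S ω, D ω)) A := by
      rw [Measure.map_apply (hSm.prodMk hDm) hAm]
      rfl
    rw [h1, (indepFun_iff_map_prod_eq_prod_map_map hSm.aemeasurable hDm.aemeasurable).mp hSD,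
      hSdist, Measure.prod_apply_symm hAm]
    exact lintegral_congr fun y => rfl
  have hcdf : ∀ᵐ y ∂(μ.map D), expMeasure lS (Set.Iic (x * y))
      = ENNReal.ofReal (1 - Real.exp (-(lS * (x * y)))) := by
    filter_upwards [hpos] with y hy
    have hxy : 0 ≤ x * y := mul_nonneg hx hy.le
    rw [expMeasure, gammaMeasure, withDensity_apply _ measurableSet_Iic]
    have := lintegral_exponentialPDF_eq_antiDeriv hlS (x * y)
    rw [show (gammaPDF 1 lS) = exponentialPDF lS from rfl, this, if_pos hxy]
  have hexp_meas : Measurable fun y : ℝ => Real.exp (-(lS * (x * y))) := by fun_prop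
  have hexp_le : ∀ᵐ y ∂(μ.map D), Real.exp (-(lS * (x * y))) ≤ 1 := by
    filter_upwards [hpos] with y hy
    rw [Real.exp_le_one_iff]
    have : 0 ≤ lS * (x * y) := mul_nonneg hlS.le (mul_nonneg hx hy.le)
    linarith
  have hstep7 : (∫⁻ y, ENNReal.ofReal (1 - Real.exp (-(lS * (x * y)))) ∂(μ.map D)).toReal
      = ∫ y, (1 - Real.exp (-(lS * (x * y)))) ∂(μ.map D) := by
    rw [integral_eq_lintegral_of_nonneg_ae]
    · filter_upwards [hexp_le] with y hy
      simp only [Pi.zero_apply]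
      linarith
    · exact (measurable_const.sub hexp_meas).aestronglyMeasurable
  have hexp_int : Integrable (fun y => Real.exp (-(lS * (x * y)))) (μ.map D) := by
    refine Integrable.mono' (integrable_const 1) hexp_meas.aestronglyMeasurable ?_
    filter_upwards [hexp_le] with y hy
    rw [Real.norm_eq_abs, abs_of_pos (Real.exp_pos _)]
    exact hy
  have hstep8 : ∫ y, (1 - Real.exp (-(lS * (x * y)))) ∂(μ.map D)
      = 1 - ∫ y, Real.exp (-(lS * (x * y))) ∂(μ.map D) := by
    rw [integral_sub (integrable_const 1) hexp_int, integral_const]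
    simp
  set t : ℝ := -(lS * x) with ht
  have hstep9 : ∫ y, Real.exp (-(lS * (x * y))) ∂(μ.map D) = mgf D μ t := by
    rw [integral_map hDm.aemeasurable hexp_meas.aestronglyMeasurable, mgf]
    have h : (fun ω => Real.exp (-(lS * (x * D ω)))) = fun ω => Real.exp (t * D ω) := by
      funext ω; congr 1; rw [ht]; ring
    show ∫ ω, Real.exp (-(lS * (x * D ω))) ∂μ = ∫ ω, Real.exp (t * D ω) ∂μ
    rw [h]
  -- Step 10: factorize the mgf
  have hmgf : mgf D μ t
      = (∫ ω, Real.exp (-(lS * x * Z ω)) ∂μ) * ∏ j, lam j / (lam j + lS * x) := by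
    rw [hDsum, hindep.mgf_sum hfm, hT, Finset.prod_insert hnotmem,
      Finset.prod_image (fun a _ b _ h => by simpa using h)]
    have hZpart : mgf (f (Sum.inr false)) μ t = ∫ ω, Real.exp (-(lS * x * Z ω)) ∂μ := by
      rw [hfZ, mgf]
      have h : (fun ω => Real.exp (t * Z ω)) = fun ω => Real.exp (-(lS * x * Z ω)) := by
        funext ω; congr 1; rw [ht]; ring
      show ∫ ω, Real.exp (t * Z ω) ∂μ = ∫ ω, Real.exp (-(lS * x * Z ω)) ∂μ
      rw [h]
    have hIpart : ∀ j, mgf (f (Sum.inl j)) μ t = lam j / (lam j + lS * x) := by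
      intro j
      rw [hfI, mgf]
      have hem : Measurable fun y : ℝ => Real.exp (t * y) := by fun_prop
      rw [← integral_map (hIm j).aemeasurable hem.aestronglyMeasurable, hIdist j]
      have : ∀ y : ℝ, Real.exp (t * y) = Real.exp (-((lS * x) * y)) := by
        intro y; congr 1; ring
      simp_rw [this]
      exact sinr_exp_laplace (hlam j) (mul_nonneg hlS.le hx)
    rw [hZpart]
    congr 1
    exact Finset.prod_congr rfl fun j _ => hIpart j
  calc (μ {ω | S ω / D ω ≤ x}).toReal
      = (∫⁻ y, ENNReal.ofReal (1 - Real.exp (-(lS * (x * y)))) ∂(μ.map D)).toReal := by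
        rw [hstep1, hstep4, lintegral_congr_ae hcdf]
    _ = 1 - (∫ ω, Real.exp (-(lS * x * Z ω)) ∂μ) * ∏ j, lam j / (lam j + lS * x) := by
        rw [hstep7, hstep8, hstep9, hmgf]
end

section
/- Let S be exponentially distributed with rate λ_S, let I_1,...,I_k be independent exponentials with rates λ_1,...,λ_k, and let Z = W² with W Gaussian of mean 0 and variance N, all mutually independent. Then the SINR γ = S/(Z + Σ_j I_j) has CDF F_γ(x) = 1 − (1/√(1 + 2 λ_S N x)) · ∏_{j=1}^k λ_j/(λ_j + x λ_S) for all x ≥ 0. -/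
open MeasureTheory ProbabilityTheory Real Set
open scoped NNReal ENNReal



lemma my_lintegral_prod_of_iIndepFun {Ω ι : Type*} [MeasurableSpace Ω] {μ : Measure Ω}
    [IsProbabilityMeasure μ] {h : ι → Ω → ℝ≥0∞}
    (hind : iIndepFun h μ) (hmeas : ∀ i, Measurable (h i))
    (s : Finset ι) :
    ∫⁻ ω, ∏ i ∈ s, h i ω ∂μ = ∏ i ∈ s, ∫⁻ ω, h i ω ∂μ := by
  classical
  induction s using Finset.induction_on with
  | empty => simp
  | insert _ _ ha ih =>
    rename_i a s
    rw [Finset.prod_insert ha]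
    have hint : IndepFun (h a) (fun ω => ∏ j ∈ s, h j ω) μ := by
      have h0 := (hind.indepFun_finsetProd_of_notMem hmeas ha).symm
      have he : (∏ j ∈ s, h j) = fun ω => ∏ j ∈ s, h j ω := by
        ext ω; simp [Finset.prod_apply]
      rwa [he] at h0
    have key := lintegral_mul_eq_lintegral_mul_lintegral_of_indepFun (hmeas a)
      (Finset.measurable_prod s fun i _ => hmeas i) hint
    simp only [Pi.mul_apply, Finset.prod_apply] at key
    simp only [Finset.prod_insert ha]
    rw [key, ih]

lemma my_expMeasure_Ioi {r t : ℝ} (hr : 0 < r) (ht : 0 ≤ t) :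
    expMeasure r (Ioi t) = ENNReal.ofReal (rexp (-(r * t))) := by
  haveI := isProbabilityMeasure_expMeasure hr
  have hIic : expMeasure r (Iic t) = ENNReal.ofReal (1 - rexp (-(r * t))) := by
    rw [expMeasure, gammaMeasure, withDensity_apply _ measurableSet_Iic]
    have : ∫⁻ y in Iic t, gammaPDF 1 r y = ∫⁻ y in Iic t, exponentialPDF r y := rfl
    rw [this, lintegral_exponentialPDF_eq_antiDeriv hr t, if_pos ht]
  have : Ioi t = (Iic t)ᶜ := compl_Iic.symm
  rw [this, measure_compl measurableSet_Iic (measure_ne_top _ _), measure_univ, hIic,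
    ← ENNReal.ofReal_one, ← ENNReal.ofReal_sub _ (by
      have : rexp (-(r * t)) ≤ 1 := exp_le_one_iff.2 (by nlinarith)
      linarith)]
  norm_num


lemma my_exp_laplace {r c : ℝ} (hr : 0 < r) (hc : 0 ≤ c) :
    ∫⁻ t, ENNReal.ofReal (rexp (-(c * t))) ∂(expMeasure r)
      = ENNReal.ofReal (r / (r + c)) := by
  have hrc : 0 < r + c := by linarith
  have hmeas : ∀ b : ℝ, Measurable (exponentialPDF b) :=
    fun b => (measurable_exponentialPDFReal b).ennreal_ofReal
  have hgp : gammaPDF 1 r = exponentialPDF r := rfl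
  rw [expMeasure, gammaMeasure, hgp,
    lintegral_withDensity_eq_lintegral_mul _ (hmeas r) (by fun_prop)]
  have hpt : ∀ t : ℝ, (exponentialPDF r * fun t => ENNReal.ofReal (rexp (-(c * t)))) t
      = ENNReal.ofReal (r / (r + c)) * exponentialPDF (r + c) t := by
    intro t
    simp only [Pi.mul_apply]
    rcases le_or_gt 0 t with ht | ht
    · rw [exponentialPDF_of_nonneg ht, exponentialPDF_of_nonneg ht,
        ← ENNReal.ofReal_mul (by positivity), ← ENNReal.ofReal_mul (by positivity)]
      congr 1
      have he : rexp (-(r * t)) * rexp (-(c * t)) = rexp (-((r + c) * t)) := by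
        rw [← Real.exp_add]; ring_nf
      rw [mul_assoc, he]
      field_simp
    · rw [exponentialPDF_of_neg ht, exponentialPDF_of_neg ht, zero_mul, mul_zero]
  rw [show (exponentialPDF r * fun t => ENNReal.ofReal (rexp (-(c * t))))
      = fun t => ENNReal.ofReal (r / (r + c)) * exponentialPDF (r + c) t from funext hpt,
    lintegral_const_mul _ (hmeas (r + c)),
    lintegral_exponentialPDF_eq_one hrc, mul_one]

lemma my_gauss_laplace {c : ℝ} (hc : 0 ≤ c) {N : ℝ≥0} (hN : 0 < N) :
    ∫⁻ w, ENNReal.ofReal (rexp (-(c * w ^ 2))) ∂(gaussianReal 0 N)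
      = ENNReal.ofReal (1 / Real.sqrt (1 + 2 * c * N)) := by
  have hNR : (0 : ℝ) < N := hN
  have hA : (0 : ℝ) < 1 + 2 * c * N := by positivity
  set A : ℝ := 1 + 2 * c * N with hAdef
  set N' : ℝ≥0 := ⟨(N : ℝ) / A, by positivity⟩ with hN'def
  have hN'R : ((N' : ℝ≥0) : ℝ) = (N : ℝ) / A := rfl
  have hN'pos : 0 < N' := by
    rw [← NNReal.coe_lt_coe, hN'R]; positivity
  rw [gaussianReal_of_var_ne_zero _ hN.ne',
    lintegral_withDensity_eq_lintegral_mul _ (measurable_gaussianPDF 0 N) (by fun_prop)]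
  have hsA : (0:ℝ) < Real.sqrt A := Real.sqrt_pos.2 hA
  have h2pN : (0:ℝ) < 2 * π * N := by positivity
  have hpt : ∀ w : ℝ, (gaussianPDF 0 N * fun w => ENNReal.ofReal (rexp (-(c * w ^ 2)))) w
      = ENNReal.ofReal (1 / Real.sqrt A) * gaussianPDF 0 N' w := by
    intro w
    simp only [Pi.mul_apply, gaussianPDF]
    rw [← ENNReal.ofReal_mul (gaussianPDFReal_nonneg 0 N w),
      ← ENNReal.ofReal_mul (by positivity)]
    congr 1
    rw [gaussianPDFReal, gaussianPDFReal, hN'R]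
    have hexp : rexp (-(w - 0) ^ 2 / (2 * (N:ℝ))) * rexp (-(c * w ^ 2))
        = rexp (-(w - 0) ^ 2 / (2 * ((N:ℝ) / A))) := by
      rw [← Real.exp_add]
      congr 1
      field_simp
      ring
    rw [mul_assoc, hexp,
      show 2 * π * ((N:ℝ)/A) = (2 * π * (N:ℝ)) / A by ring,
      Real.sqrt_div h2pN.le, inv_div]
    field_simp
  rw [show (gaussianPDF 0 N * fun w => ENNReal.ofReal (rexp (-(c * w ^ 2))))
      = fun w => ENNReal.ofReal (1 / Real.sqrt A) * gaussianPDF 0 N' w from funext hpt,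
    lintegral_const_mul _ (measurable_gaussianPDF 0 N'),
    lintegral_gaussianPDF_eq_one 0 hN'pos.ne', mul_one]


open MeasureTheory ProbabilityTheory
open scoped NNReal

/-- Proposition 1 of the paper: closed-form CDF of the SINR
`γ = S / (W² + Σ_j I_j)` with `S` exponential of rate `lS`, the `I j` exponential of rates
`lam j`, and `W` Gaussian with mean 0 and variance `N`, all mutually independent. -/
theorem sinr_cdf_awgn
    {Ω : Type*} [MeasurableSpace Ω] (μ : Measure Ω) [IsProbabilityMeasure μ]
    (k : ℕ) (S W : Ω → ℝ) (I : Fin k → Ω → ℝ)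
    (lS : ℝ) (hlS : 0 < lS) (lam : Fin k → ℝ) (hlam : ∀ j, 0 < lam j)
    (N : ℝ≥0) (hN : 0 < N)
    (hSm : Measurable S) (hWm : Measurable W) (hIm : ∀ j, Measurable (I j))
    (f : Fin k ⊕ Bool → Ω → ℝ)
    (hf : f = Sum.elim I (fun b => if b then S else W))
    (hindep : iIndepFun f μ)
    (hSdist : μ.map S = expMeasure lS)
    (hIdist : ∀ j, μ.map (I j) = expMeasure (lam j))
    (hWdist : μ.map W = gaussianReal 0 N)
    (hden : ∀ᵐ ω ∂μ, 0 < (W ω) ^ 2 + ∑ j, I j ω)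
    (x : ℝ) (hx : 0 ≤ x) :
    (μ {ω | S ω / ((W ω) ^ 2 + ∑ j, I j ω) ≤ x}).toReal
      = 1 - (1 / Real.sqrt (1 + 2 * lS * (N : ℝ) * x)) * ∏ j, lam j / (lam j + x * lS) := by
  classical
  set c : ℝ := lS * x with hc
  have hc0 : 0 ≤ c := mul_nonneg hlS.le hx
  set D : Ω → ℝ := fun ω => (W ω) ^ 2 + ∑ j, I j ω with hDdef
  have hDm : Measurable D := by
    apply Measurable.add
    · exact hWm.pow_const 2
    · exact Finset.measurable_sum Finset.univ fun j _ => hIm j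
  have hdenD : ∀ᵐ ω ∂μ, 0 < D ω := hden
  -- the family g
  set g : Fin k ⊕ Bool → Ω → ℝ :=
    Sum.elim I (fun b => if b then S else fun ω => (W ω) ^ 2) with hgdef
  have hg_inl : ∀ j, g (Sum.inl j) = I j := fun j => rfl
  have hg_false : g (Sum.inr false) = fun ω => (W ω) ^ 2 := by simp [hgdef]
  have hg_true : g (Sum.inr true) = S := by simp [hgdef]
  have hgm : ∀ i, Measurable (g i) := by
    rintro (j | b)
    · exact hIm j
    · cases b
      · rw [hg_false]; exact hWm.pow_const 2
      · rw [hg_true]; exact hSm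
  have hgindep : iIndepFun g μ := by
    have hgeq : g = fun i => (Sum.elim (fun _ : Fin k => (id : ℝ → ℝ))
        (fun b => if b then (id : ℝ → ℝ) else fun y : ℝ => y ^ 2) i) ∘ f i := by
      rw [hgdef, hf]; funext i; rcases i with j | b
      · rfl
      · cases b <;> rfl
    rw [hgeq]
    refine hindep.comp _ ?_
    rintro (j | b)
    · exact measurable_id
    · cases b
      · exact measurable_id.pow_const 2
      · exact measurable_id
  -- the index set
  set s : Finset (Fin k ⊕ Bool) :=
    insert (Sum.inr false) (Finset.univ.image Sum.inl) with hsdef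
  have hinj : ∀ a ∈ (Finset.univ : Finset (Fin k)), ∀ b ∈ Finset.univ,
      (Sum.inl a : Fin k ⊕ Bool) = Sum.inl b → a = b := fun a _ b _ h => by injection h
  have hfalse_notin : (Sum.inr false : Fin k ⊕ Bool) ∉ Finset.univ.image Sum.inl := by simp
  have htrue_notin : (Sum.inr true : Fin k ⊕ Bool) ∉ s := by simp [hsdef]
  have hsum : ∀ ω, D ω = ∑ i ∈ s, g i ω := by
    intro ω
    rw [hsdef, Finset.sum_insert hfalse_notin, Finset.sum_image hinj]
    simp only [hg_false]
    congr 1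
  -- independence of D and S
  have hindepDS : IndepFun D S μ := by
    have h1 := hgindep.indepFun_finsetSum_of_notMem hgm htrue_notin
    rw [hg_true] at h1
    have h2 : (∑ i ∈ s, g i) = D := by
      funext ω
      rw [Finset.sum_apply, hsum ω]
    rwa [h2] at h1
  have hpairlaw := (indepFun_iff_map_prod_eq_prod_map_map hDm.aemeasurable hSm.aemeasurable).1
    hindepDS
  -- the value q
  set q : ℝ := (1 / Real.sqrt (1 + 2 * c * N)) * ∏ j, lam j / (lam j + c) with hqdef
  have hq0 : 0 ≤ q := by
    apply mul_nonneg
    · positivity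
    · exact Finset.prod_nonneg fun j _ => by have := hlam j; positivity
  have hq1 : q ≤ 1 := by
    have hA : (1:ℝ) ≤ 1 + 2 * c * N := by
      have h2 : (0:ℝ) ≤ 2 * c * N := by positivity
      linarith
    have h1 : 1 / Real.sqrt (1 + 2 * c * N) ≤ 1 := by
      rw [div_le_one (Real.sqrt_pos.2 (by linarith))]
      exact Real.one_le_sqrt.2 hA
    have h2 : (∏ j, lam j / (lam j + c)) ≤ 1 :=
      Finset.prod_le_one (fun j _ => by have := hlam j; positivity)
        (fun j _ => by
          have := hlam j
          rw [div_le_one (by linarith)]; linarith)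
    calc q ≤ 1 * 1 := mul_le_mul h1 h2 (Finset.prod_nonneg fun j _ => by
        have := hlam j; positivity) (by norm_num)
    _ = 1 := by norm_num
  -- compute the upper-tail probability
  haveI : IsProbabilityMeasure (expMeasure lS) := isProbabilityMeasure_expMeasure hlS
  have hP : μ {ω | x * D ω < S ω} = ENNReal.ofReal q := by
    have hsetP : MeasurableSet {p : ℝ × ℝ | x * p.1 < p.2} :=
      measurableSet_lt (measurable_fst.const_mul x) measurable_snd
    have step1 : μ {ω | x * D ω < S ω}
        = (μ.map (fun ω => (D ω, S ω))) {p : ℝ × ℝ | x * p.1 < p.2} := by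
      rw [Measure.map_apply (hDm.prodMk hSm) hsetP]
      rfl
    have step2 : (μ.map (fun ω => (D ω, S ω))) {p : ℝ × ℝ | x * p.1 < p.2}
        = ∫⁻ d, expMeasure lS (Set.Ioi (x * d)) ∂(μ.map D) := by
      rw [hpairlaw, hSdist, Measure.prod_apply hsetP]
      congr 1
    have haeD : ∀ᵐ d ∂(μ.map D), 0 < d :=
      (ae_map_iff hDm.aemeasurable measurableSet_Ioi).2 hdenD
    have step3 : ∫⁻ d, expMeasure lS (Set.Ioi (x * d)) ∂(μ.map D)
        = ∫⁻ d, ENNReal.ofReal (Real.exp (-(c * d))) ∂(μ.map D) := by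
      refine lintegral_congr_ae ?_
      filter_upwards [haeD] with d hd
      rw [my_expMeasure_Ioi hlS (mul_nonneg hx hd.le)]
      congr 2
      rw [hc]; ring
    have step4 : ∫⁻ d, ENNReal.ofReal (Real.exp (-(c * d))) ∂(μ.map D)
        = ∫⁻ ω, ENNReal.ofReal (Real.exp (-(c * D ω))) ∂μ :=
      lintegral_map (by fun_prop) hDm
    -- factor as a product
    set ψ : ℝ → ℝ≥0∞ := fun y => ENNReal.ofReal (Real.exp (-(c * y))) with hψdef
    have hψm : Measurable ψ := by fun_prop
    have hfunindep : iIndepFun (fun i => ψ ∘ g i) μ :=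
      hgindep.comp _ (fun _ => hψm)
    have step5 : ∫⁻ ω, ENNReal.ofReal (Real.exp (-(c * D ω))) ∂μ
        = ∫⁻ ω, ∏ i ∈ s, (ψ ∘ g i) ω ∂μ := by
      refine lintegral_congr fun ω => ?_
      rw [hsum ω]
      have h1 : -(c * ∑ i ∈ s, g i ω) = ∑ i ∈ s, -(c * g i ω) := by
        rw [Finset.mul_sum, ← Finset.sum_neg_distrib]
      rw [h1, Real.exp_sum, ENNReal.ofReal_prod_of_nonneg fun i _ => (Real.exp_pos _).le]
      rfl
    have step6 : ∫⁻ ω, ∏ i ∈ s, (ψ ∘ g i) ω ∂μ = ∏ i ∈ s, ∫⁻ ω, (ψ ∘ g i) ω ∂μ :=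
      my_lintegral_prod_of_iIndepFun hfunindep (fun i => hψm.comp (hgm i)) s
    have hWfact : ∫⁻ ω, (ψ ∘ g (Sum.inr false)) ω ∂μ
        = ENNReal.ofReal (1 / Real.sqrt (1 + 2 * c * N)) := by
      have h1 : ∫⁻ ω, (ψ ∘ g (Sum.inr false)) ω ∂μ
          = ∫⁻ w, ENNReal.ofReal (Real.exp (-(c * w ^ 2))) ∂(μ.map W) := by
        rw [lintegral_map (by fun_prop) hWm]
        refine lintegral_congr fun ω => ?_
        rw [hg_false]
        simp [hψdef, Function.comp]
      rw [h1, hWdist, my_gauss_laplace hc0 hN]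
    have hIfact : ∀ j, ∫⁻ ω, (ψ ∘ g (Sum.inl j)) ω ∂μ
        = ENNReal.ofReal (lam j / (lam j + c)) := by
      intro j
      have h1 : ∫⁻ ω, (ψ ∘ g (Sum.inl j)) ω ∂μ
          = ∫⁻ t, ENNReal.ofReal (Real.exp (-(c * t))) ∂(μ.map (I j)) := by
        rw [lintegral_map (by fun_prop) (hIm j)]
        rfl
      rw [h1, hIdist j, my_exp_laplace (hlam j) hc0]
    have step7 : ∏ i ∈ s, ∫⁻ ω, (ψ ∘ g i) ω ∂μ = ENNReal.ofReal q := by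
      rw [hsdef, Finset.prod_insert hfalse_notin, Finset.prod_image hinj, hWfact]
      rw [show ∀ P : Fin k → ℝ≥0∞, (∏ j, P j) = ∏ j, P j from fun _ => rfl]
      have : (∏ j, ∫⁻ ω, (ψ ∘ g (Sum.inl j)) ω ∂μ)
          = ∏ j, ENNReal.ofReal (lam j / (lam j + c)) :=
        Finset.prod_congr rfl fun j _ => hIfact j
      rw [this, ← ENNReal.ofReal_prod_of_nonneg
        (fun j _ => by have := hlam j; positivity), hqdef,
        ← ENNReal.ofReal_mul (by positivity)]
    rw [step1, step2, step3, step4, step5, step6, step7]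
  -- put everything together
  have hsetae : {ω | S ω / ((W ω) ^ 2 + ∑ j, I j ω) ≤ x} =ᵐ[μ] {ω | S ω ≤ x * D ω} := by
    filter_upwards [hdenD] with ω hω
    have : (S ω / ((W ω) ^ 2 + ∑ j, I j ω) ≤ x) = (S ω ≤ x * D ω) := by
      rw [eq_iff_iff]
      exact div_le_iff₀ hω
    exact this
  have hlt_meas : MeasurableSet {ω | x * D ω < S ω} :=
    measurableSet_lt (measurable_const.mul hDm) hSm
  have hcompl : {ω | S ω ≤ x * D ω} = {ω | x * D ω < S ω}ᶜ := by
    ext ω; simp [not_lt]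
  rw [measure_congr hsetae, hcompl, measure_compl hlt_meas (measure_ne_top μ _),
    measure_univ, hP, ← ENNReal.ofReal_one, ← ENNReal.ofReal_sub _ hq0,
    ENNReal.toReal_ofReal (by linarith)]
  have hqeq : q = (1 / Real.sqrt (1 + 2 * lS * (N : ℝ) * x)) * ∏ j, lam j / (lam j + x * lS) := by
    rw [hqdef, hc]
    congr 1
    · congr 2
      ring
    · exact Finset.prod_congr rfl fun j _ => by rw [mul_comm x lS]
  rw [hqeq]
end
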